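/- Let p be a prime, let G be a group, let n ≥ 1, and let A_n be the kernel of the natural homomorphism Aut(G) → Aut(G/γ_{n+1}^p G). Then for every k ≥ 1, every α ∈ A_n and every g ∈ γ_k^p G, one has g⁻¹α(g) ∈ γ_{n+k}^p G; that is, A_n acts trivially on γ_k^p G / γ_{n+k}^p G. -/

import Mathlib

/-! Common definitions following the paper "Residual p properties of mapping class groups
and surface groups" by L. Paris. -/

/-- The commutator `[g,h] = g⁻¹h⁻¹gh`. -/
def commAB {G : Type*} [Group G] (g h : G) : G := g⁻¹ * h⁻¹ * g * h

/-- The commutator subgroup `[K,H]`, generated by all `[g,h]` with `g ∈ K`, `h ∈ H`. -/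
def commSub {G : Type*} [Group G] (K H : Subgroup G) : Subgroup G :=
  Subgroup.closure {x | ∃ g ∈ K, ∃ h ∈ H, x = commAB g h}

/-- The subgroup `[K,H]^p`, generated by all `[g,h]` (`g ∈ K`, `h ∈ H`) together with all
`h^p` (`h ∈ H`). -/
def pComm (p : ℕ) {G : Type*} [Group G] (K H : Subgroup G) : Subgroup G :=
  Subgroup.closure ({x | ∃ g ∈ K, ∃ h ∈ H, x = commAB g h} ∪ {x | ∃ h ∈ H, x = h ^ p})

/-- The lower `𝔽_p`-linear central filtration: `γ_1^p G = G` and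
`γ_{n+1}^p G = [G, γ_n^p G]^p` (with the harmless convention `γ_0^p G = G`). -/
def gammaP (p : ℕ) (G : Type*) [Group G] : ℕ → Subgroup G
  | 0 => ⊤
  | 1 => ⊤
  | n + 2 => pComm p ⊤ (gammaP p G (n + 1))

theorem pComm_top_normal (p : ℕ) {G : Type*} [Group G] {H : Subgroup G} (hH : H.Normal) :
    (pComm p ⊤ H).Normal := by
  constructor
  intro x hx g
  unfold pComm at hx ⊢
  induction hx using Subgroup.closure_induction with
  | mem y hy =>
    apply Subgroup.subset_closure
    rcases hy with ⟨a, -, h, hh, rfl⟩ | ⟨h, hh, rfl⟩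
    · exact Or.inl ⟨g * a * g⁻¹, trivial, g * h * g⁻¹, hH.conj_mem h hh g,
        by unfold commAB; group⟩
    · exact Or.inr ⟨g * h * g⁻¹, hH.conj_mem h hh g, (conj_pow).symm⟩
  | one => simpa using Subgroup.one_mem _
  | mul a b ha hb iha ihb =>
    have e : g * (a * b) * g⁻¹ = (g * a * g⁻¹) * (g * b * g⁻¹) := by group
    rw [e]; exact Subgroup.mul_mem _ iha ihb
  | inv a ha iha =>
    have e : g * a⁻¹ * g⁻¹ = (g * a * g⁻¹)⁻¹ := by group
    rw [e]; exact Subgroup.inv_mem _ iha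

instance gammaP_normal (p : ℕ) (G : Type*) [Group G] : ∀ n, (gammaP p G n).Normal
  | 0 => by unfold gammaP; infer_instance
  | 1 => by unfold gammaP; infer_instance
  | n + 2 => by unfold gammaP; exact pComm_top_normal p (gammaP_normal p G (n + 1))

/-- `G` is residually `p`: every nontrivial element survives in some finite `p`-group
quotient. -/
def IsResiduallyP (p : ℕ) (G : Type*) [Group G] : Prop :=
  ∀ g : G, g ≠ 1 → ∃ (P : Type) (_ : Group P) (_ : Finite P) (φ : G →* P),
    IsPGroup p P ∧ Function.Surjective φ ∧ φ g ≠ 1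

/-- `G` is conjugacy `p`-separable. -/
def IsConjPSeparable (p : ℕ) (G : Type*) [Group G] : Prop :=
  ∀ g h : G, IsConj g h ∨ ∃ (P : Type) (_ : Group P) (_ : Finite P) (φ : G →* P),
    IsPGroup p P ∧ Function.Surjective φ ∧ ¬ IsConj (φ g) (φ h)

/-- Property A: every automorphism of `G` preserving every conjugacy class is inner. -/
def PropertyA (G : Type*) [Group G] : Prop :=
  ∀ α : MulAut G, (∀ g : G, IsConj g (α g)) → α ∈ (MulAut.conj : G →* MulAut G).range

/-- `A_n`: the kernel of the natural homomorphism `Aut(G) → Aut(G/γ_{n+1}^p G)`, i.e. the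
automorphisms acting trivially modulo `γ_{n+1}^p G`. -/
def An (p : ℕ) (G : Type*) [Group G] (n : ℕ) : Subgroup (MulAut G) where
  carrier := {α | ∀ g : G, g⁻¹ * α g ∈ gammaP p G (n + 1)}
  one_mem' := by intro g; simpa using Subgroup.one_mem _
  mul_mem' := by
    intro a b ha hb g
    have e : g⁻¹ * (a * b) g = (g⁻¹ * b g) * ((b g)⁻¹ * a (b g)) := by
      rw [MulAut.mul_apply]; group
    rw [e]; exact Subgroup.mul_mem _ (hb g) (ha (b g))
  inv_mem' := by
    intro a ha g
    have h := ha ((a⁻¹ : MulAut G) g)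
    rw [MulAut.apply_inv_self] at h
    have e : g⁻¹ * (a⁻¹ : MulAut G) g = (((a⁻¹ : MulAut G) g)⁻¹ * g)⁻¹ := by group
    rw [e]; exact Subgroup.inv_mem _ h

theorem mem_An {p : ℕ} {G : Type*} [Group G] {n : ℕ} {α : MulAut G} :
    α ∈ An p G n ↔ ∀ g : G, g⁻¹ * α g ∈ gammaP p G (n + 1) := Iff.rfl

/-- `I_p(G)`: the kernel of the natural homomorphism `Aut(G) → Aut(G/γ_2^p G)`. -/
abbrev Ip (p : ℕ) (G : Type*) [Group G] : Subgroup (MulAut G) := An p G 1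

/-- `Inn(G)`, viewed as a subgroup of `I_p(G)`. -/
def InnSub (p : ℕ) (G : Type*) [Group G] : Subgroup (Ip p G) :=
  Subgroup.comap (Ip p G).subtype (MulAut.conj : G →* MulAut G).range

instance innSub_normal (p : ℕ) (G : Type*) [Group G] : (InnSub p G).Normal := by
  constructor
  rintro n hn g
  obtain ⟨x, hx⟩ := hn
  refine ⟨(g : MulAut G) x, ?_⟩
  have hx' : MulAut.conj x = (n : MulAut G) := hx
  show MulAut.conj ((g : MulAut G) x) = ((g * n * g⁻¹ : Ip p G) : MulAut G)
  ext y
  simp only [Subgroup.coe_mul, Subgroup.coe_inv, MulAut.mul_apply, MulAut.conj_apply, ← hx',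
    map_mul, map_inv, MulAut.apply_inv_self]

/-- The surface relator `[x_1,y_1][x_2,y_2]⋯[x_ρ,y_ρ]` in the free group on
`x_1, …, x_ρ, y_1, …, y_ρ`. -/
def surfaceRel (ρ : ℕ) : FreeGroup (Fin ρ ⊕ Fin ρ) :=
  (List.ofFn fun i : Fin ρ =>
    commAB (FreeGroup.of (Sum.inl i)) (FreeGroup.of (Sum.inr i))).prod

/-- The fundamental group of the closed oriented surface of genus `ρ`, given by the
presentation `⟨x_1, …, x_ρ, y_1, …, y_ρ | [x_1,y_1]⋯[x_ρ,y_ρ] = 1⟩`. -/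
abbrev SurfaceGroup (ρ : ℕ) : Type :=
  PresentedGroup ({surfaceRel ρ} : Set (FreeGroup (Fin ρ ⊕ Fin ρ)))
section Auxiliary

variable {G : Type*} [Group G]

lemma commAB_inv (g h : G) : (commAB g h)⁻¹ = commAB h g := by unfold commAB; group

lemma commAB_mul_right (a y z : G) :
    commAB a (y * z) = commAB a z * (z⁻¹ * commAB a y * z) := by unfold commAB; group

lemma commAB_mul_left (x y z : G) :
    commAB (x * y) z = y⁻¹ * commAB x z * y * commAB y z := by unfold commAB; group

lemma commAB_inv_right (a y : G) :
    commAB a y⁻¹ = y * (commAB a y)⁻¹ * y⁻¹ := by unfold commAB; group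

lemma commAB_one_right (a : G) : commAB a 1 = 1 := by unfold commAB; group

lemma commAB_eq_one_of_commute {a b : G} (h : Commute a b) : commAB a b = 1 := by
  unfold commAB
  have : a⁻¹ * b⁻¹ * a * b = a⁻¹ * b⁻¹ * (a * b) := by group
  rw [this, h.eq]; group

lemma hall_witt (a b c : G) :
    (b⁻¹ * commAB (commAB a b⁻¹) c * b) * (c⁻¹ * commAB (commAB b c⁻¹) a * c) *
      (a⁻¹ * commAB (commAB c a⁻¹) b * a) = 1 := by
  unfold commAB; group

lemma commAB_pow_right {a b : G} (hc : Commute b (commAB a b)) :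
    ∀ m : ℕ, commAB a (b ^ m) = commAB a b ^ m
  | 0 => by simp [commAB_one_right]
  | (m + 1) => by
    have h2 : b⁻¹ * commAB a b ^ m * b = commAB a b ^ m := by
      rw [(hc.pow_right m).inv_left.eq]; group
    rw [pow_succ, commAB_mul_right, commAB_pow_right hc m, h2, ← pow_succ']

lemma commAB_mem_pComm (p : ℕ) {H : Subgroup G} (x : G) {h : G} (hh : h ∈ H) :
    commAB x h ∈ pComm p ⊤ H :=
  Subgroup.subset_closure (Or.inl ⟨x, trivial, h, hh, rfl⟩)

lemma pow_mem_pComm (p : ℕ) {H : Subgroup G} {h : G} (hh : h ∈ H) :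
    h ^ p ∈ pComm p ⊤ H :=
  Subgroup.subset_closure (Or.inr ⟨h, hh, rfl⟩)

lemma pComm_mono (p : ℕ) {H K : Subgroup G} (hHK : H ≤ K) : pComm p ⊤ H ≤ pComm p ⊤ K := by
  apply Subgroup.closure_mono
  rintro x (⟨g, -, h, hh, rfl⟩ | ⟨h, hh, rfl⟩)
  exacts [Or.inl ⟨g, trivial, h, hHK hh, rfl⟩, Or.inr ⟨h, hHK hh, rfl⟩]

lemma pComm_le_gammaP (p : ℕ) (G : Type*) [Group G] :
    ∀ m, pComm p ⊤ (gammaP p G m) ≤ gammaP p G (m + 1)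
  | 0 => le_top
  | (m + 1) => le_rfl

lemma gammaP_succ_le (p : ℕ) (G : Type*) [Group G] :
    ∀ m, gammaP p G (m + 1) ≤ gammaP p G m
  | 0 => le_top
  | 1 => le_top
  | (m + 2) => pComm_mono p (gammaP_succ_le p G (m + 1))

lemma gammaP_le_of_le (p : ℕ) (G : Type*) [Group G] {k m : ℕ} (h : k ≤ m) :
    gammaP p G m ≤ gammaP p G k := by
  induction h with
  | refl => exact le_rfl
  | step h ih => exact le_trans (gammaP_succ_le p G _) ih

lemma commAB_mem_gammaP (p : ℕ) {m : ℕ} (x : G) {h : G} (hh : h ∈ gammaP p G m) :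
    commAB x h ∈ gammaP p G (m + 1) :=
  pComm_le_gammaP p G m (commAB_mem_pComm p x hh)

lemma commAB_mem_gammaP' (p : ℕ) {m : ℕ} {h : G} (hh : h ∈ gammaP p G m) (x : G) :
    commAB h x ∈ gammaP p G (m + 1) := by
  rw [← commAB_inv]; exact Subgroup.inv_mem _ (commAB_mem_gammaP p x hh)

lemma pow_mem_gammaP (p : ℕ) {m : ℕ} {h : G} (hh : h ∈ gammaP p G m) :
    h ^ p ∈ gammaP p G (m + 1) :=
  pComm_le_gammaP p G m (pow_mem_pComm p hh)

lemma mk_commute {N : Subgroup G} [N.Normal] {a b : G} (h : commAB a b ∈ N) :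
    Commute (a : G ⧸ N) (b : G ⧸ N) := by
  show (a : G ⧸ N) * b = (b : G ⧸ N) * a
  rw [← QuotientGroup.mk_mul, ← QuotientGroup.mk_mul, QuotientGroup.eq]
  have : (a * b)⁻¹ * (b * a) = (commAB a b)⁻¹ := by unfold commAB; group
  rw [this]; exact Subgroup.inv_mem _ h

lemma mk_commAB {N : Subgroup G} [N.Normal] (a b : G) :
    ((commAB a b : G) : G ⧸ N) = commAB (a : G ⧸ N) (b : G ⧸ N) := by
  simp [commAB]

end Auxiliary

lemma comm_gamma (p : ℕ) (G : Type*) [Group G] :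
    ∀ j i : ℕ, ∀ x ∈ gammaP p G i, ∀ y ∈ gammaP p G j,
      commAB x y ∈ gammaP p G (i + j)
  | 0, i, x, hx, y, _ => by
    have h1 : commAB x y ∈ gammaP p G (i + 1) := commAB_mem_gammaP' p hx y
    exact gammaP_le_of_le p G (by omega) h1
  | 1, i, x, hx, y, _ => commAB_mem_gammaP' p hx y
  | (j + 2), i, x, hx, y, hy => by
    have hy' : y ∈ pComm p ⊤ (gammaP p G (j + 1)) := hy
    clear hy
    unfold pComm at hy'
    induction hy' using Subgroup.closure_induction with
    | mem z hz =>
      rcases hz with ⟨g, -, h, hh, rfl⟩ | ⟨h, hh, rfl⟩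
      · -- z = commAB g h with h ∈ γ_{j+1}
        have ht2 : x⁻¹ * commAB (commAB h⁻¹ x⁻¹) g * x ∈ gammaP p G (i + (j + 2)) := by
          have h1 : commAB x⁻¹ h⁻¹ ∈ gammaP p G (i + (j + 1)) :=
            comm_gamma p G (j + 1) i x⁻¹ (Subgroup.inv_mem _ hx) h⁻¹ (Subgroup.inv_mem _ hh)
          have h1' : commAB h⁻¹ x⁻¹ ∈ gammaP p G (i + (j + 1)) := by
            rw [← commAB_inv]; exact Subgroup.inv_mem _ h1
          have h2 : commAB (commAB h⁻¹ x⁻¹) g ∈ gammaP p G (i + (j + 1) + 1) :=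
            commAB_mem_gammaP' p h1' g
          have h3 := (gammaP_normal p G _).conj_mem _ h2 x⁻¹
          rw [inv_inv] at h3
          exact gammaP_le_of_le p G (by omega) h3
        have ht3 : g⁻¹ * commAB (commAB x g⁻¹) h⁻¹ * g ∈ gammaP p G (i + (j + 2)) := by
          have h1 : commAB x g⁻¹ ∈ gammaP p G (i + 1) := commAB_mem_gammaP' p hx g⁻¹
          have h2 : commAB (commAB x g⁻¹) h⁻¹ ∈ gammaP p G ((i + 1) + (j + 1)) :=
            comm_gamma p G (j + 1) (i + 1) _ h1 h⁻¹ (Subgroup.inv_mem _ hh)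
          have h3 := (gammaP_normal p G _).conj_mem _ h2 g⁻¹
          rw [inv_inv] at h3
          exact gammaP_le_of_le p G (by omega) h3
        have hident := hall_witt g h⁻¹ x
        rw [inv_inv] at hident
        have hA : h * commAB (commAB g h) x * h⁻¹ =
            ((x⁻¹ * commAB (commAB h⁻¹ x⁻¹) g * x) *
              (g⁻¹ * commAB (commAB x g⁻¹) h⁻¹ * g))⁻¹ := by
          rw [eq_inv_iff_mul_eq_one, ← mul_assoc]
          exact hident
        have hmem : h * commAB (commAB g h) x * h⁻¹ ∈ gammaP p G (i + (j + 2)) := by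
          rw [hA]; exact Subgroup.inv_mem _ (Subgroup.mul_mem _ ht2 ht3)
        have h4 := (gammaP_normal p G _).conj_mem _ hmem h⁻¹
        have e : h⁻¹ * (h * commAB (commAB g h) x * h⁻¹) * h⁻¹⁻¹ =
            commAB (commAB g h) x := by group
        rw [e] at h4
        rw [← commAB_inv]
        exact Subgroup.inv_mem _ h4
      · -- z = h ^ p with h ∈ γ_{j+1}
        have hc : commAB x h ∈ gammaP p G (i + (j + 1)) :=
          comm_gamma p G (j + 1) i x hx h hh
        rw [← QuotientGroup.eq_one_iff]
        have hbc : Commute ((h : G) : G ⧸ gammaP p G (i + (j + 2)))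
            ((commAB x h : G) : G ⧸ gammaP p G (i + (j + 2))) := by
          apply mk_commute
          have := commAB_mem_gammaP p h hc
          exact gammaP_le_of_le p G (by omega) this
        rw [mk_commAB] at hbc
        have e : ((commAB x (h ^ p) : G) : G ⧸ gammaP p G (i + (j + 2))) =
            commAB ((x : G) : G ⧸ gammaP p G (i + (j + 2))) (((h : G) : _) ^ p) := by
          rw [mk_commAB]
          norm_cast
        rw [e, commAB_pow_right hbc p, ← mk_commAB, ← QuotientGroup.mk_pow,
          QuotientGroup.eq_one_iff]
        exact gammaP_le_of_le p G (by omega) (pow_mem_gammaP p hc)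
    | one => simpa [commAB_one_right] using Subgroup.one_mem _
    | mul y z hy hz ihy ihz =>
      rw [commAB_mul_right]
      refine Subgroup.mul_mem _ ihz ?_
      have h3 := (gammaP_normal p G _).conj_mem _ ihy z⁻¹
      rw [inv_inv] at h3
      exact h3
    | inv y hy ihy =>
      rw [commAB_inv_right]
      exact (gammaP_normal p G _).conj_mem _ (Subgroup.inv_mem _ ihy) y

lemma comm_congr {Q : Type*} [Group Q] (g u h v : Q)
    (hv : ∀ z, Commute v z)
    (hu1 : Commute u (commAB g h)) (hu2 : Commute u h) :
    commAB (g * u) (h * v) = commAB g h := by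
  rw [commAB_mul_right, commAB_eq_one_of_commute (hv (g * u)).symm, one_mul]
  rw [commAB_mul_left, commAB_eq_one_of_commute hu2, mul_one]
  rw [show u⁻¹ * commAB g h * u = commAB g h from by rw [hu1.inv_left.eq]; group]
  rw [(hv (commAB g h)).inv_left.eq]
  group

/-- **Claim 1 in the proof of Theorem 2.4.** `A_n` acts trivially on `γ_k^p G / γ_{n+k}^p G`
for all `k ≥ 1`. -/
theorem An_acts_trivially (p : ℕ) (hp : p.Prime) (G : Type*) [Group G] (n : ℕ) (hn : 1 ≤ n)
    (α : MulAut G) (hα : α ∈ An p G n) (k : ℕ) (hk : 1 ≤ k)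
    (g : G) (hg : g ∈ gammaP p G k) :
    g⁻¹ * α g ∈ gammaP p G (n + k) := by
  obtain ⟨k', rfl⟩ : ∃ k', k = k' + 1 := ⟨k - 1, by omega⟩
  clear hk
  induction k' generalizing g with
  | zero => exact hα g
  | succ k' ih =>
    have hg' : g ∈ pComm p ⊤ (gammaP p G (k' + 1)) := hg
    clear hg
    unfold pComm at hg'
    induction hg' using Subgroup.closure_induction with
    | mem z hz =>
      rcases hz with ⟨a, -, h, hh, rfl⟩ | ⟨h, hh, rfl⟩
      · -- z = commAB a h, h ∈ γ_{k'+1}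
        have hu : a⁻¹ * α a ∈ gammaP p G (n + 1) := hα a
        have hvm : h⁻¹ * α h ∈ gammaP p G (n + (k' + 1)) := ih h hh
        rw [← QuotientGroup.eq_one_iff]
        rw [QuotientGroup.mk_mul, QuotientGroup.mk_inv, inv_mul_eq_one]
        have eα : α (commAB a h) = commAB (a * (a⁻¹ * α a)) (h * (h⁻¹ * α h)) := by
          unfold commAB
          simp only [map_mul, map_inv]
          group
        rw [eα, mk_commAB, mk_commAB,
          show ((a * (a⁻¹ * α a) : G) : G ⧸ gammaP p G (n + (k' + 1 + 1))) =
            (a : G ⧸ gammaP p G (n + (k' + 1 + 1))) * ((a⁻¹ * α a : G) : _) from rfl,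
          show ((h * (h⁻¹ * α h) : G) : G ⧸ gammaP p G (n + (k' + 1 + 1))) =
            (h : G ⧸ gammaP p G (n + (k' + 1 + 1))) * ((h⁻¹ * α h : G) : _) from rfl]
        refine (comm_congr (Q := G ⧸ gammaP p G (n + (k' + 1 + 1))) _ _ _ _ ?_ ?_ ?_).symm
        · intro z
          induction z using QuotientGroup.induction_on with
          | _ w =>
            apply mk_commute
            exact gammaP_le_of_le p G (by omega) (commAB_mem_gammaP' p hvm w)
        · apply mk_commute
          have hch : commAB a h ∈ gammaP p G (k' + 1 + 1) := commAB_mem_gammaP p a hh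
          have := comm_gamma p G (k' + 1 + 1) (n + 1) _ hu _ hch
          exact gammaP_le_of_le p G (by omega) this
        · apply mk_commute
          have := comm_gamma p G (k' + 1) (n + 1) _ hu h hh
          exact gammaP_le_of_le p G (by omega) this
      · -- z = h ^ p, h ∈ γ_{k'+1}
        have hvm : h⁻¹ * α h ∈ gammaP p G (n + (k' + 1)) := ih h hh
        rw [← QuotientGroup.eq_one_iff]
        have e : α (h ^ p) = (h * (h⁻¹ * α h)) ^ p := by rw [map_pow]; group
        rw [e]
        have hcom : Commute ((h : G) : G ⧸ gammaP p G (n + (k' + 1 + 1)))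
            ((h⁻¹ * α h : G) : G ⧸ gammaP p G (n + (k' + 1 + 1))) := by
          apply mk_commute
          exact gammaP_le_of_le p G (by omega) (commAB_mem_gammaP p h hvm)
        have hvp : (((h⁻¹ * α h : G) : G ⧸ gammaP p G (n + (k' + 1 + 1)))) ^ p = 1 := by
          rw [← QuotientGroup.mk_pow, QuotientGroup.eq_one_iff]
          exact gammaP_le_of_le p G (by omega) (pow_mem_gammaP p hvm)
        rw [QuotientGroup.mk_mul, QuotientGroup.mk_inv, QuotientGroup.mk_pow,
          QuotientGroup.mk_pow, QuotientGroup.mk_mul, hcom.mul_pow, hvp, mul_one,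
          inv_mul_cancel]
    | one => simpa using Subgroup.one_mem _
    | mul a b ha hb iha ihb =>
      have e : (a * b)⁻¹ * α (a * b) = (b⁻¹ * (a⁻¹ * α a) * b) * (b⁻¹ * α b) := by
        rw [map_mul]; group
      rw [e]
      refine Subgroup.mul_mem _ ?_ ihb
      have h3 := (gammaP_normal p G _).conj_mem _ iha b⁻¹
      rwa [inv_inv] at h3
    | inv a ha iha =>
      have e : (a⁻¹)⁻¹ * α a⁻¹ = a * (a⁻¹ * α a)⁻¹ * a⁻¹ := by rw [map_inv]; group
      rw [e]
      exact (gammaP_normal p G _).conj_mem _ (Subgroup.inv_mem _ iha) a
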